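/- Let p_m(t) denote the Kazhdan–Lusztig polynomial of the m-cycle, given explicitly by p_m(t) = Σ_{i=0}^{⌊(m-1)/2⌋} (1/(i+1))·C(m-i-2, i)·C(m, i)·t^i for m ≥ 2, with p_1(t) = 0 and p_0(t) = t⁻¹. Define Q(n,r)(t) = Σ_{k=0}^{r} (-t)^k · C(r,k) · p_{n+r-2k}(t). Then Q satisfies the recursion Q(n,r) = Q(n+1, r-1) - t·Q(n-1, r-1) for all n ≥ 1, r ≥ 1. -/
import Mathlib


open LaurentPolynomial Finset

/-- `cyclePoly m` is the Kazhdan–Lusztig polynomial `p_m` of an `m`-cycle for `m ≥ 2`,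
with the conventions `p_1 = 0` and `p_0 = t⁻¹`. -/
noncomputable def cyclePoly (m : ℕ) : LaurentPolynomial ℚ :=
  if m = 0 then T (-1)
  else if m = 1 then 0
  else ∑ i ∈ range ((m - 1) / 2 + 1),
    C ((1 / (i + 1 : ℚ)) * (Nat.choose (m - i - 2) i) * (Nat.choose m i)) * T i

/-- `sawPoly n r = Q(n,r) = Σ_{k=0}^r (-t)^k C(r,k) p_{n+r-2k}`, the Kazhdan–Lusztig
polynomial of the partial saw graph `S_{n,r}`. -/
noncomputable def sawPoly (n r : ℕ) : LaurentPolynomial ℚ :=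
  ∑ k ∈ range (r + 1), (-(T 1)) ^ k * (Nat.choose r k : LaurentPolynomial ℚ)
    * cyclePoly (n + r - 2 * k)

theorem sawPoly_recursion (n r : ℕ) (hn : 1 ≤ n) (hr : 1 ≤ r) :
    sawPoly n r = sawPoly (n + 1) (r - 1) - T 1 * sawPoly (n - 1) (r - 1) := by
  cases n with
  | zero => omega
  | succ n =>
  cases r with
  | zero => omega
  | succ m =>
  simp only [Nat.add_sub_cancel, sawPoly]
  have hidx : ∀ j : ℕ, n + 1 + (m + 1) - 2 * (j + 1) = n + m - 2 * j := by
    intro j; omega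
  have hidx2 : ∀ j : ℕ, n + 2 + m - 2 * (j + 1) = n + m - 2 * j := by
    intro j; omega
  rw [Finset.sum_range_succ'
    (fun k => (-(T 1 : LaurentPolynomial ℚ)) ^ k *
      ((m + 1).choose k : LaurentPolynomial ℚ) * cyclePoly (n + 1 + (m + 1) - 2 * k))]
  have hsplit : ∀ j ∈ range (m + 1),
      (-(T 1 : LaurentPolynomial ℚ)) ^ (j + 1) *
        ((m + 1).choose (j + 1) : LaurentPolynomial ℚ) *
        cyclePoly (n + 1 + (m + 1) - 2 * (j + 1))
      = ((-(T 1 : LaurentPolynomial ℚ)) ^ (j + 1) *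
          (m.choose (j + 1) : LaurentPolynomial ℚ) * cyclePoly (n + m - 2 * j))
        + (-(T 1)) * ((-(T 1 : LaurentPolynomial ℚ)) ^ j *
          (m.choose j : LaurentPolynomial ℚ) * cyclePoly (n + m - 2 * j)) := by
    intro j _
    rw [hidx, Nat.choose_succ_succ']
    push_cast
    ring
  rw [Finset.sum_congr rfl hsplit, Finset.sum_add_distrib, ← Finset.mul_sum]
  -- first piece: top term vanishes
  have htop : (∑ j ∈ range (m + 1), (-(T 1 : LaurentPolynomial ℚ)) ^ (j + 1) *
      (m.choose (j + 1) : LaurentPolynomial ℚ) * cyclePoly (n + m - 2 * j))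
      = ∑ j ∈ range m, (-(T 1 : LaurentPolynomial ℚ)) ^ (j + 1) *
      (m.choose (j + 1) : LaurentPolynomial ℚ) * cyclePoly (n + m - 2 * j) := by
    rw [Finset.sum_range_succ, Nat.choose_succ_self]
    simp
  rw [htop]
  have hfirst : (∑ j ∈ range m, (-(T 1 : LaurentPolynomial ℚ)) ^ (j + 1) *
        (m.choose (j + 1) : LaurentPolynomial ℚ) * cyclePoly (n + m - 2 * j))
      + (-(T 1 : LaurentPolynomial ℚ)) ^ 0 * ((m + 1).choose 0 : LaurentPolynomial ℚ) *
        cyclePoly (n + 1 + (m + 1) - 2 * 0)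
      = ∑ k ∈ range (m + 1), (-(T 1 : LaurentPolynomial ℚ)) ^ k *
        (m.choose k : LaurentPolynomial ℚ) * cyclePoly (n + 1 + 1 + m - 2 * k) := by
    rw [Finset.sum_range_succ'
      (fun k => (-(T 1 : LaurentPolynomial ℚ)) ^ k *
        (m.choose k : LaurentPolynomial ℚ) * cyclePoly (n + 1 + 1 + m - 2 * k))]
    congr 1
    · refine Finset.sum_congr rfl fun j _ => ?_
      have : n + 1 + 1 + m - 2 * (j + 1) = n + m - 2 * j := by omega
      rw [this]
    · have : n + 1 + 1 + m - 2 * 0 = n + 1 + (m + 1) - 2 * 0 := by omega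
      rw [this]
      norm_num
  linear_combination hfirst
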